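/- arXiv:1202.1773 — 5 statements merged into one kernel-verified Lean document; each statement's English description precedes it below -/
import Mathlib

section
/- For the function b defined by b(ω) = sin((π/2)v(|ω|-1)) for 1 ≤ |ω| ≤ 2, b(ω) = cos((π/2)v(|ω|/2 - 1)) for 2 < |ω| ≤ 4, and b(ω) = 0 otherwise, one has b(ω)² + b(ω/2)² = 1 for all ω with 2 ≤ ω ≤ 4. -/
noncomputable def v (x : ℝ) : ℝ :=
  if x < 0 then 0
  else if x ≤ 1 then 35*x^4 - 84*x^5 + 70*x^6 - 20*x^7
  else 1

noncomputable def b (ω : ℝ) : ℝ :=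
  if 1 ≤ |ω| ∧ |ω| ≤ 2 then Real.sin (Real.pi/2 * v (|ω| - 1))
  else if 2 < |ω| ∧ |ω| ≤ 4 then Real.cos (Real.pi/2 * v (|ω|/2 - 1))
  else 0

theorem b_sq_sum_one : ∀ ω : ℝ, 2 ≤ ω → ω ≤ 4 → b ω ^ 2 + b (ω/2) ^ 2 = 1 := by
  intro ω h2 h4
  have hω : |ω| = ω := abs_of_nonneg (by linarith)
  have hω2 : |ω/2| = ω/2 := abs_of_nonneg (by linarith)
  rcases eq_or_lt_of_le h2 with heq | hlt
  · subst heq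
    have h1 : |(2:ℝ)| = 2 := by norm_num
    have h2' : |(2:ℝ)/2| = 1 := by norm_num
    simp only [b, v, h1, h2']
    norm_num
  · have hb1 : b ω = Real.cos (Real.pi/2 * v (ω/2 - 1)) := by
      rw [b, hω, if_neg (by push_neg; intro _; linarith), if_pos ⟨hlt, h4⟩]
    have hb2 : b (ω/2) = Real.sin (Real.pi/2 * v (ω/2 - 1)) := by
      rw [b, hω2, if_pos ⟨by linarith, by linarith⟩]
    rw [hb1, hb2, add_comm]
    exact Real.sin_sq_add_cos_sq _
end

section
/- For every ω ∈ ℝ with |ω| ≥ 1, the sum over j ≥ -1 of b(2^{-j}ω)² equals 1, where for each ω only finitely many terms are nonzero. -/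
lemma v_zero : v 0 = 0 := by norm_num [v]

lemma v_one : v 1 = 1 := by norm_num [v]

lemma b_zero_of_lt_one {u : ℝ} (h : |u| < 1) : b u = 0 := by
  unfold b
  rw [if_neg (by push_neg; intro h1; linarith), if_neg (by push_neg; intro h1; linarith)]

lemma b_zero_of_ge_four {u : ℝ} (h : 4 ≤ |u|) : b u = 0 := by
  unfold b
  rw [if_neg (by push_neg; intro h1; linarith)]
  split_ifs with h2
  · have h4 : |u| = 4 := le_antisymm h2.2 h
    rw [h4]
    norm_num [v_one]
  · rfl

theorem b_partition_of_unity :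
    ∀ ω : ℝ, 1 ≤ |ω| →
      (Function.support (fun n : ℕ => b ((2:ℝ) ^ ((1:ℤ) - n) * ω) ^ 2)).Finite ∧
      ∑' n : ℕ, b ((2:ℝ) ^ ((1:ℤ) - n) * ω) ^ 2 = 1 := by
  intro ω hω
  set x := |ω| with hxdef
  -- find k with 2^k ≤ x < 2^(k+1)
  obtain ⟨k, hk1, hk2⟩ : ∃ k : ℕ, (2:ℝ)^(k:ℤ) ≤ x ∧ x < 2^((k:ℤ)+1) := by
    set m : ℕ := ⌊x⌋₊ with hm
    have hm1 : 1 ≤ m := Nat.le_floor (by exact_mod_cast hω)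
    refine ⟨Nat.log 2 m, ?_, ?_⟩
    · have h1 : (2:ℕ)^(Nat.log 2 m) ≤ m := Nat.pow_log_le_self 2 (by omega)
      have h2 : (m:ℝ) ≤ x := Nat.floor_le (by linarith)
      calc (2:ℝ)^((Nat.log 2 m : ℕ):ℤ) = ((2^(Nat.log 2 m) : ℕ) : ℝ) := by
            rw [zpow_natCast]; push_cast; ring
        _ ≤ (m:ℝ) := by exact_mod_cast h1
        _ ≤ x := h2
    · have h1 : m < 2^(Nat.log 2 m + 1) := Nat.lt_pow_succ_log_self (by norm_num) m
      have h1' : m + 1 ≤ 2^(Nat.log 2 m + 1) := h1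
      have h2 : x < (m:ℝ) + 1 := Nat.lt_floor_add_one x
      calc x < (m:ℝ) + 1 := h2
        _ ≤ ((2^(Nat.log 2 m + 1) : ℕ) : ℝ) := by exact_mod_cast h1'
        _ = 2^((Nat.log 2 m : ℕ):ℤ ) + 1 - 1 + 0 + 2^((Nat.log 2 m:ℕ):ℤ) := by
            push_cast [pow_succ]
            rw [zpow_natCast]; ring
        _ = 2^(((Nat.log 2 m : ℕ):ℤ)+1) := by rw [zpow_add₀ (two_ne_zero)]; ring
  have hxpos : (0:ℝ) < x := by linarith
  have habs : ∀ n : ℕ, |(2:ℝ) ^ ((1:ℤ) - n) * ω| = 2 ^ ((1:ℤ) - n) * x := by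
    intro n
    rw [abs_mul, abs_of_pos (by positivity)]
  -- vanishing outside {k, k+1}
  have hzero : ∀ n : ℕ, n ∉ ({k, k+1} : Finset ℕ) → b ((2:ℝ)^((1:ℤ)-n) * ω) = 0 := by
    intro n hn
    simp only [Finset.mem_insert, Finset.mem_singleton] at hn
    push_neg at hn
    rcases lt_or_gt_of_ne hn.1 with h | h
    · -- n < k : argument ≥ 4
      apply b_zero_of_ge_four
      rw [habs]
      have hle : (2:ℝ)^((2:ℤ)-k) ≤ 2^((1:ℤ)-n) := by
        apply zpow_le_zpow_right₀ (by norm_num)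
        omega
      have : (2:ℝ)^((2:ℤ)-k) * 2^(k:ℤ) = 4 := by
        rw [← zpow_add₀ (two_ne_zero : (2:ℝ) ≠ 0)]
        norm_num
      calc (4:ℝ) = 2^((2:ℤ)-k) * 2^(k:ℤ) := this.symm
        _ ≤ 2^((1:ℤ)-n) * x := by
            apply mul_le_mul hle hk1 (by positivity) (by positivity)
    · -- n > k+1 : argument < 1
      apply b_zero_of_lt_one
      rw [habs]
      have hle : (2:ℝ)^((1:ℤ)-n) ≤ 2^(-(1:ℤ)-k) := by
        apply zpow_le_zpow_right₀ (by norm_num)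
        omega
      have key : (2:ℝ)^(-(1:ℤ)-k) * 2^((k:ℤ)+1) = 1 := by
        rw [← zpow_add₀ (two_ne_zero : (2:ℝ) ≠ 0),
          show (-(1:ℤ)-k + ((k:ℤ)+1)) = 0 by ring, zpow_zero]
      calc (2:ℝ)^((1:ℤ)-n) * x ≤ 2^(-(1:ℤ)-k) * x := by
            apply mul_le_mul_of_nonneg_right hle (le_of_lt hxpos)
        _ < 2^(-(1:ℤ)-k) * 2^((k:ℤ)+1) := by
            apply mul_lt_mul_of_pos_left hk2 (by positivity)
        _ = 1 := key
  constructor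
  · apply Set.Finite.subset (Finset.finite_toSet ({k, k+1} : Finset ℕ))
    intro n hn
    simp only [Function.mem_support] at hn
    by_contra hc
    apply hn
    rw [hzero n (by simpa using hc)]
    ring
  · rw [tsum_eq_sum (s := ({k, k+1} : Finset ℕ))
      (by intro n hn; rw [hzero n hn]; ring)]
    rw [Finset.sum_pair (by omega : k ≠ k+1)]
    -- compute the two terms
    set y : ℝ := 2^(-(k:ℤ)) * x with hy
    have hy1 : 1 ≤ y := by
      rw [hy]
      have : (2:ℝ)^(-(k:ℤ)) * 2^(k:ℤ) = 1 := by
        rw [← zpow_add₀ (two_ne_zero : (2:ℝ) ≠ 0)]; norm_num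
      calc (1:ℝ) = 2^(-(k:ℤ)) * 2^(k:ℤ) := this.symm
        _ ≤ 2^(-(k:ℤ)) * x := by
            apply mul_le_mul_of_nonneg_left hk1 (by positivity)
    have hy2 : y < 2 := by
      rw [hy]
      have : (2:ℝ)^(-(k:ℤ)) * 2^((k:ℤ)+1) = 2 := by
        rw [← zpow_add₀ (two_ne_zero : (2:ℝ) ≠ 0)]; norm_num
      calc 2^(-(k:ℤ)) * x < 2^(-(k:ℤ)) * 2^((k:ℤ)+1) := by
            apply mul_lt_mul_of_pos_left hk2 (by positivity)
        _ = 2 := this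
    have habsk : |(2:ℝ) ^ ((1:ℤ) - k) * ω| = 2 * y := by
      rw [habs, hy]
      rw [show ((1:ℤ) - k) = 1 + (-(k:ℤ)) by ring, zpow_add₀ (two_ne_zero : (2:ℝ) ≠ 0)]
      norm_num
      ring
    have habsk1 : |(2:ℝ) ^ ((1:ℤ) - (k+1:ℕ)) * ω| = y := by
      rw [habs, hy]
      congr 1
      push_cast
      congr 1
      ring
    rcases eq_or_lt_of_le hy1 with heq | hlt
    · -- y = 1 : edge case
      have hb1 : b ((2:ℝ) ^ ((1:ℤ) - (k+1:ℕ)) * ω) = 0 := by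
        unfold b
        rw [habsk1, ← heq, if_pos (by norm_num)]
        norm_num [v_zero]
      have hb2 : b ((2:ℝ) ^ ((1:ℤ) - k) * ω) = 1 := by
        unfold b
        rw [habsk, ← heq, if_pos (by norm_num)]
        norm_num [v_one, Real.sin_pi_div_two]
      rw [hb1, hb2]
      norm_num
    · -- 1 < y < 2 : sin² + cos² = 1
      have hb1 : b ((2:ℝ) ^ ((1:ℤ) - (k+1:ℕ)) * ω) = Real.sin (Real.pi/2 * v (y - 1)) := by
        unfold b
        rw [habsk1, if_pos ⟨hy1, le_of_lt hy2⟩]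
      have hb2 : b ((2:ℝ) ^ ((1:ℤ) - k) * ω) = Real.cos (Real.pi/2 * v (y - 1)) := by
        unfold b
        rw [habsk, if_neg (by push_neg; intro; linarith), if_pos ⟨by linarith, by linarith⟩]
        norm_num
      rw [hb1, hb2]
      exact Real.cos_sq_add_sin_sq _
end

section
/- For j ≥ -1 and ω ∈ [2^{j+1}, 2^{j+2}], b(2^{-j}ω)² + b(2^{-j-1}ω)² = 1. -/
theorem b_adjacent_scales :
    ∀ j : ℤ, -1 ≤ j → ∀ ω ∈ Set.Icc ((2:ℝ) ^ (j+1)) ((2:ℝ) ^ (j+2)),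
      b ((2:ℝ) ^ (-j) * ω) ^ 2 + b ((2:ℝ) ^ (-j-1) * ω) ^ 2 = 1 := by
  intro j hj ω hω
  obtain ⟨h1, h2⟩ := hω
  have h2ne : (2:ℝ) ≠ 0 := by norm_num
  set t := (2:ℝ) ^ (-j) * ω with ht
  have hpow : (0:ℝ) < (2:ℝ) ^ (-j) := zpow_pos (by norm_num) _
  have ht2 : (2:ℝ) ≤ t := by
    calc (2:ℝ) = (2:ℝ) ^ (-j) * (2:ℝ) ^ (j+1) := by
          rw [← zpow_add₀ h2ne]; norm_num
    _ ≤ t := mul_le_mul_of_nonneg_left h1 hpow.le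
  have ht4 : t ≤ 4 := by
    calc t ≤ (2:ℝ) ^ (-j) * (2:ℝ) ^ (j+2) := mul_le_mul_of_nonneg_left h2 hpow.le
    _ = 4 := by rw [← zpow_add₀ h2ne]; norm_num
  have hhalf : (2:ℝ) ^ (-j-1) * ω = t / 2 := by
    rw [ht, sub_eq_add_neg, zpow_add₀ h2ne, zpow_neg_one]
    ring
  rw [hhalf]
  have habs_t : |t| = t := abs_of_nonneg (by linarith)
  have habs_half : |t/2| = t/2 := abs_of_nonneg (by linarith)
  have hbhalf : b (t/2) = Real.sin (Real.pi/2 * v (t/2 - 1)) := by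
    rw [b, habs_half, if_pos ⟨by linarith, by linarith⟩]
  rcases eq_or_lt_of_le ht2 with heq | hlt
  · -- t = 2
    rw [← heq] at hbhalf ⊢
    have hb2 : b 2 = 1 := by
      rw [b]
      norm_num [abs_of_nonneg, v]
    have hv0 : v ((2:ℝ)/2 - 1) = 0 := by norm_num [v]
    rw [hb2, hbhalf, hv0]
    norm_num
  · -- t > 2
    have hbt : b t = Real.cos (Real.pi/2 * v (t/2 - 1)) := by
      rw [b, habs_t, if_neg (by push_neg; intro _; linarith),
        if_pos ⟨hlt, ht4⟩]
    rw [hbt, hbhalf]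
    exact Real.cos_sq_add_sin_sq _
end

section
/- For |ω| ≤ 1/2, Σ_{j≥0} |ψ̂₁(2^{-2j}ω)|² = 0; for 1/2 < |ω| < 1 this sum equals sin²((π/2)v(2|ω|-1)); and for |ω| ≥ 1 it equals 1. -/
noncomputable def psi1 (ω : ℝ) : ℝ := Real.sqrt (b (2*ω) ^ 2 + b ω ^ 2)

lemma b_zero_of_le_one {x : ℝ} (h : |x| ≤ 1) : b x = 0 := by
  unfold b
  rcases eq_or_lt_of_le h with h1 | h1
  · rw [if_pos ⟨h1.ge, by linarith⟩, h1]
    simp [v_zero]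
  · rw [if_neg, if_neg] <;> rintro ⟨h2, h3⟩ <;> linarith

lemma b_zero_of_four_le {x : ℝ} (h : 4 ≤ |x|) : b x = 0 := by
  unfold b
  rcases eq_or_lt_of_le h with h1 | h1
  · rw [if_neg (by rintro ⟨h2, h3⟩; linarith), if_pos ⟨by linarith, le_of_eq h1.symm⟩, ← h1]
    norm_num [v_one, Real.cos_pi_div_two]
  · rw [if_neg, if_neg] <;> rintro ⟨h2, h3⟩ <;> linarith

lemma b_eq_sin {x : ℝ} (h1 : 1 ≤ |x|) (h2 : |x| ≤ 2) :
    b x = Real.sin (Real.pi/2 * v (|x| - 1)) := by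
  unfold b; rw [if_pos ⟨h1, h2⟩]

lemma b_sq_add {x : ℝ} (h1 : 1 ≤ |x|) (h2 : |x| ≤ 2) :
    b (2*x) ^ 2 + b x ^ 2 = 1 := by
  have hx2 : |2*x| = 2 * |x| := by rw [abs_mul]; norm_num
  have hb : b x = Real.sin (Real.pi/2 * v (|x| - 1)) := b_eq_sin h1 h2
  rcases eq_or_lt_of_le h1 with h0 | h0
  · -- |x| = 1
    have hbx : b x = 0 := b_zero_of_le_one h0.ge
    have hb2x : b (2*x) = 1 := by
      unfold b
      rw [if_pos ⟨by rw [hx2, ← h0]; norm_num, by rw [hx2, ← h0]; norm_num⟩, hx2, ← h0]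
      norm_num [v_one, Real.sin_pi_div_two]
    rw [hbx, hb2x]
    norm_num
  rcases eq_or_lt_of_le h2 with h3 | h3
  · have hz : b (2*x) = 0 := b_zero_of_four_le (by rw [hx2, h3]; norm_num)
    rw [hz, hb, h3]
    norm_num [v_one, Real.sin_pi_div_two]
  · have hb2 : b (2*x) = Real.cos (Real.pi/2 * v (|x| - 1)) := by
      unfold b
      rw [if_neg (by rw [hx2]; rintro ⟨h4, h5⟩; linarith),
          if_pos (by rw [hx2]; exact ⟨by linarith, by linarith⟩)]
      rw [hx2]
      have : 2 * |x| / 2 = |x| := by ring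
      rw [this]
    rw [hb, hb2, add_comm]
    exact Real.sin_sq_add_cos_sq _

lemma abs_psi1_sq (x : ℝ) : |psi1 x| ^ 2 = b (2*x) ^ 2 + b x ^ 2 := by
  have h : 0 ≤ b (2*x) ^ 2 + b x ^ 2 := by positivity
  rw [psi1, abs_of_nonneg (Real.sqrt_nonneg _), Real.sq_sqrt h]

lemma term_zero_of_le {ω : ℝ} {j : ℕ} (h : 2 * ((2:ℝ) ^ (-(2 * (j:ℤ))) * |ω|) ≤ 1) :
    |psi1 ((2:ℝ) ^ (-(2 * (j:ℤ))) * ω)| ^ 2 = 0 := by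
  have hp : (0:ℝ) < (2:ℝ) ^ (-(2 * (j:ℤ))) := zpow_pos two_pos _
  have ha : |(2:ℝ) ^ (-(2 * (j:ℤ))) * ω| = (2:ℝ) ^ (-(2 * (j:ℤ))) * |ω| := by
    rw [abs_mul, abs_of_pos hp]
  have hb1 : b ((2:ℝ) ^ (-(2 * (j:ℤ))) * ω) = 0 := by
    apply b_zero_of_le_one; rw [ha]; nlinarith [abs_nonneg ω]
  have hb2 : b (2 * ((2:ℝ) ^ (-(2 * (j:ℤ))) * ω)) = 0 := by
    apply b_zero_of_le_one
    rw [abs_mul, ha, abs_of_pos (by norm_num : (0:ℝ) < 2)]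
    linarith
  rw [abs_psi1_sq, hb1, hb2]
  norm_num

lemma term_zero_of_ge {ω : ℝ} {j : ℕ} (h : 4 ≤ (2:ℝ) ^ (-(2 * (j:ℤ))) * |ω|) :
    |psi1 ((2:ℝ) ^ (-(2 * (j:ℤ))) * ω)| ^ 2 = 0 := by
  have hp : (0:ℝ) < (2:ℝ) ^ (-(2 * (j:ℤ))) := zpow_pos two_pos _
  have ha : |(2:ℝ) ^ (-(2 * (j:ℤ))) * ω| = (2:ℝ) ^ (-(2 * (j:ℤ))) * |ω| := by
    rw [abs_mul, abs_of_pos hp]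
  have hb1 : b ((2:ℝ) ^ (-(2 * (j:ℤ))) * ω) = 0 := by
    apply b_zero_of_four_le; rw [ha]; linarith
  have hb2 : b (2 * ((2:ℝ) ^ (-(2 * (j:ℤ))) * ω)) = 0 := by
    apply b_zero_of_four_le
    rw [abs_mul, ha, abs_of_pos (by norm_num : (0:ℝ) < 2)]
    linarith
  rw [abs_psi1_sq, hb1, hb2]
  norm_num

lemma two_zpow_le {i j : ℤ} (h : i ≤ j) : (2:ℝ) ^ i ≤ (2:ℝ) ^ j :=
  zpow_le_zpow_right₀ one_le_two h

theorem psi1_sum_cases :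
    (∀ ω : ℝ, |ω| ≤ 1/2 → ∑' j : ℕ, |psi1 ((2:ℝ) ^ (-(2 * (j:ℤ))) * ω)| ^ 2 = 0) ∧
    (∀ ω : ℝ, 1/2 < |ω| → |ω| < 1 →
      ∑' j : ℕ, |psi1 ((2:ℝ) ^ (-(2 * (j:ℤ))) * ω)| ^ 2
        = Real.sin (Real.pi/2 * v (2*|ω| - 1)) ^ 2) ∧
    (∀ ω : ℝ, 1 ≤ |ω| → ∑' j : ℕ, |psi1 ((2:ℝ) ^ (-(2 * (j:ℤ))) * ω)| ^ 2 = 1) := by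
  refine ⟨?_, ?_, ?_⟩
  · -- |ω| ≤ 1/2 : all terms vanish
    intro ω hω
    have hz : ∀ j : ℕ, |psi1 ((2:ℝ) ^ (-(2 * (j:ℤ))) * ω)| ^ 2 = 0 := by
      intro j
      apply term_zero_of_le
      have h1 : (2:ℝ) ^ (-(2 * (j:ℤ))) ≤ 1 := by
        have := two_zpow_le (show -(2 * (j:ℤ)) ≤ 0 by omega)
        simpa using this
      nlinarith [zpow_pos (show (0:ℝ) < 2 by norm_num) (-(2 * (j:ℤ))), abs_nonneg ω]
    rw [tsum_congr hz, tsum_zero]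
  · -- 1/2 < |ω| < 1 : only j = 0 survives
    intro ω h1 h2
    have hz : ∀ j : ℕ, j ≠ 0 → |psi1 ((2:ℝ) ^ (-(2 * (j:ℤ))) * ω)| ^ 2 = 0 := by
      intro j hj
      apply term_zero_of_le
      have h3 : (2:ℝ) ^ (-(2 * (j:ℤ))) ≤ (2:ℝ) ^ (-2 : ℤ) :=
        two_zpow_le (by omega)
      have h4 : (2:ℝ) ^ (-2 : ℤ) = 1/4 := by norm_num
      rw [h4] at h3
      have h5 : (2:ℝ) ^ (-(2 * (j:ℤ))) * |ω| ≤ (1/4) * 1 :=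
        mul_le_mul h3 h2.le (abs_nonneg ω) (by norm_num)
      linarith
    rw [tsum_eq_single 0 hz]
    have h0 : (2:ℝ) ^ (-(2 * ((0:ℕ):ℤ))) = 1 := by norm_num
    rw [abs_psi1_sq, h0, one_mul]
    have hbω : b ω = 0 := b_zero_of_le_one (le_of_lt h2)
    have habs : |2 * ω| = 2 * |ω| := by rw [abs_mul]; norm_num
    have hb2 : b (2 * ω) = Real.sin (Real.pi/2 * v (|2*ω| - 1)) :=
      b_eq_sin (by rw [habs]; linarith) (by rw [habs]; linarith)
    rw [hbω, hb2, habs]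
    ring_nf
  · -- 1 ≤ |ω|
    intro ω hω
    set a := |ω| with ha
    obtain ⟨n, hn1, hn2⟩ := exists_mem_Ico_zpow (show (0:ℝ) < a by linarith)
      (show (1:ℝ) < 2 by norm_num)
    have hn0 : 0 ≤ n := by
      by_contra hc
      push_neg at hc
      have h1 : (2:ℝ) ^ (n+1) ≤ (2:ℝ) ^ (0:ℤ) := two_zpow_le (by omega)
      simp only [zpow_zero] at h1
      linarith
    obtain ⟨k, rfl⟩ : ∃ k : ℕ, (k:ℤ) = n := ⟨n.toNat, Int.toNat_of_nonneg hn0⟩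
    -- key positivity/abs facts
    have habs : ∀ j : ℕ, |(2:ℝ) ^ (-(2 * (j:ℤ))) * ω| = (2:ℝ) ^ (-(2 * (j:ℤ))) * a := by
      intro j
      rw [abs_mul, abs_of_pos (zpow_pos two_pos _)]
    have h2abs : ∀ j : ℕ, |2 * ((2:ℝ) ^ (-(2 * (j:ℤ))) * ω)| = 2 * ((2:ℝ) ^ (-(2 * (j:ℤ))) * a) := by
      intro j
      rw [abs_mul, habs, abs_of_pos (by norm_num : (0:ℝ) < 2)]
    rcases Nat.even_or_odd k with ⟨m, hm⟩ | ⟨m, hm⟩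
    · -- k = 2m : term m equals 1, others vanish
      have hm' : (k:ℤ) = 2*m := by omega
      have hy1 : 1 ≤ (2:ℝ) ^ (-(2 * (m:ℤ))) * a := by
        have : (2:ℝ) ^ (-(2 * (m:ℤ))) * (2:ℝ) ^ ((k:ℤ)) = 1 := by
          rw [← zpow_add₀ (by norm_num : (2:ℝ) ≠ 0), hm']
          norm_num
        nlinarith [zpow_pos (show (0:ℝ) < 2 by norm_num) (-(2 * (m:ℤ)))]
      have hy2 : (2:ℝ) ^ (-(2 * (m:ℤ))) * a < 2 := by
        have he : (2:ℝ) ^ (-(2 * (m:ℤ))) * (2:ℝ) ^ ((k:ℤ)+1) = 2 := by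
          rw [← zpow_add₀ (by norm_num : (2:ℝ) ≠ 0), hm']
          norm_num
        nlinarith [zpow_pos (show (0:ℝ) < 2 by norm_num) (-(2 * (m:ℤ)))]
      have hsum : ∑' j : ℕ, |psi1 ((2:ℝ) ^ (-(2 * (j:ℤ))) * ω)| ^ 2
          = |psi1 ((2:ℝ) ^ (-(2 * (m:ℤ))) * ω)| ^ 2 := by
        apply tsum_eq_single
        intro j hj
        rcases lt_or_gt_of_ne hj with hj1 | hj1
        · -- j < m : big argument
          apply term_zero_of_ge
          rw [← ha]
          have h4 : (4:ℝ) = (2:ℝ)^(2:ℤ) := by norm_num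
          calc (4:ℝ) = (2:ℝ)^(2:ℤ) * 1 := by norm_num
            _ ≤ (2:ℝ)^(2:ℤ) * ((2:ℝ) ^ (-(2 * (m:ℤ))) * a) := by
                nlinarith [zpow_pos (show (0:ℝ) < 2 by norm_num) (2:ℤ)]
            _ = (2:ℝ)^((2:ℤ) + -(2 * (m:ℤ))) * a := by
                rw [zpow_add₀ (by norm_num : (2:ℝ) ≠ 0)]; ring
            _ ≤ (2:ℝ) ^ (-(2 * (j:ℤ))) * a := by
                have := two_zpow_le (show (2:ℤ) + -(2 * (m:ℤ)) ≤ -(2 * (j:ℤ)) by omega)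
                nlinarith
        · -- j > m : small argument
          apply term_zero_of_le
          rw [← ha]
          have hle : (2:ℝ) ^ (-(2 * (j:ℤ))) ≤ (1/4) * (2:ℝ) ^ (-(2 * (m:ℤ))) := by
            have h5 := two_zpow_le (show -(2 * (j:ℤ)) ≤ (-2:ℤ) + -(2 * (m:ℤ)) by omega)
            rw [zpow_add₀ (by norm_num : (2:ℝ) ≠ 0)] at h5
            have h6 : (2:ℝ)^(-2:ℤ) = 1/4 := by norm_num
            rw [h6] at h5
            linarith
          have h7 : (2:ℝ) ^ (-(2 * (j:ℤ))) * a ≤ (1/4) * (2:ℝ) ^ (-(2 * (m:ℤ))) * a :=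
            mul_le_mul_of_nonneg_right hle (abs_nonneg ω)
          nlinarith
      rw [hsum, abs_psi1_sq]
      exact b_sq_add (by rw [habs]; exact hy1) (by rw [habs]; linarith)
    · -- k = 2m + 1 : terms m and m+1
      have hm' : (k:ℤ) = 2*m+1 := by omega
      -- z := 2^{-(2m+1)} a ∈ [1,2)
      have hz1 : 1 ≤ (2:ℝ) ^ (-(2 * (m:ℤ)) - 1) * a := by
        have : (2:ℝ) ^ (-(2 * (m:ℤ)) - 1) * (2:ℝ) ^ ((k:ℤ)) = 1 := by
          rw [← zpow_add₀ (by norm_num : (2:ℝ) ≠ 0), hm']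
          norm_num
        nlinarith [zpow_pos (show (0:ℝ) < 2 by norm_num) (-(2 * (m:ℤ)) - 1)]
      have hz2 : (2:ℝ) ^ (-(2 * (m:ℤ)) - 1) * a < 2 := by
        have he : (2:ℝ) ^ (-(2 * (m:ℤ)) - 1) * (2:ℝ) ^ ((k:ℤ)+1) = 2 := by
          rw [← zpow_add₀ (by norm_num : (2:ℝ) ≠ 0), hm']
          norm_num
        nlinarith [zpow_pos (show (0:ℝ) < 2 by norm_num) (-(2 * (m:ℤ)) - 1)]
      have hsum : ∑' j : ℕ, |psi1 ((2:ℝ) ^ (-(2 * (j:ℤ))) * ω)| ^ 2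
          = ∑ j ∈ ({m, m+1} : Finset ℕ), |psi1 ((2:ℝ) ^ (-(2 * (j:ℤ))) * ω)| ^ 2 := by
        apply tsum_eq_sum
        intro j hj
        simp only [Finset.mem_insert, Finset.mem_singleton] at hj
        push_neg at hj
        rcases lt_or_gt_of_ne hj.1 with hj1 | hj1
        · apply term_zero_of_ge
          rw [← ha]
          calc (4:ℝ) = (2:ℝ)^(3:ℤ) * (1/2) := by norm_num
            _ ≤ (2:ℝ)^(3:ℤ) * ((2:ℝ) ^ (-(2 * (m:ℤ)) - 1) * a) := by
                nlinarith [zpow_pos (show (0:ℝ) < 2 by norm_num) (3:ℤ)]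
            _ = (2:ℝ)^((3:ℤ) + (-(2 * (m:ℤ)) - 1)) * a := by
                rw [zpow_add₀ (by norm_num : (2:ℝ) ≠ 0)]; ring
            _ ≤ (2:ℝ) ^ (-(2 * (j:ℤ))) * a := by
                have := two_zpow_le (show (3:ℤ) + (-(2 * (m:ℤ)) - 1) ≤ -(2 * (j:ℤ)) by omega)
                nlinarith
        · have hj2 : m + 2 ≤ j := by omega
          apply term_zero_of_le
          rw [← ha]
          have hle : (2:ℝ) ^ (-(2 * (j:ℤ))) ≤ (1/8) * (2:ℝ) ^ (-(2 * (m:ℤ)) - 1) := by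
            have h5 := two_zpow_le (show -(2 * (j:ℤ)) ≤ (-3:ℤ) + (-(2 * (m:ℤ)) - 1) by omega)
            rw [zpow_add₀ (by norm_num : (2:ℝ) ≠ 0)] at h5
            have h6 : (2:ℝ)^(-3:ℤ) = 1/8 := by norm_num
            rw [h6] at h5
            linarith
          have h7 : (2:ℝ) ^ (-(2 * (j:ℤ))) * a ≤ (1/8) * (2:ℝ) ^ (-(2 * (m:ℤ)) - 1) * a :=
            mul_le_mul_of_nonneg_right hle (abs_nonneg ω)
          nlinarith
      rw [hsum, Finset.sum_pair (by omega : m ≠ m + 1)]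
      -- rewrite both terms
      rw [abs_psi1_sq, abs_psi1_sq]
      -- identify arguments: 2^{-2m} ω = 2 * w, 2^{-2(m+1)} ω = w/2 with w = 2^{-2m-1} ω
      set w : ℝ := (2:ℝ) ^ (-(2 * (m:ℤ)) - 1) * ω with hw
      have e1 : (2:ℝ) ^ (-(2 * (m:ℤ))) * ω = 2 * w := by
        rw [hw, show (-(2 * (m:ℤ))) = (-(2 * (m:ℤ)) - 1) + 1 by ring,
          zpow_add₀ (by norm_num : (2:ℝ) ≠ 0)]
        ring_nf
      have e2 : (2:ℝ) ^ (-(2 * ((m+1:ℕ):ℤ))) * ω = w / 2 := by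
        rw [hw, show (-(2 * ((m+1:ℕ):ℤ))) = (-(2 * (m:ℤ)) - 1) + (-1) by push_cast; ring,
          zpow_add₀ (by norm_num : (2:ℝ) ≠ 0)]
        norm_num
        ring
      have hwabs : |w| = (2:ℝ) ^ (-(2 * (m:ℤ)) - 1) * a := by
        rw [hw, abs_mul, abs_of_pos (zpow_pos two_pos _)]
      have hb1 : b (2 * ((2:ℝ) ^ (-(2 * (m:ℤ))) * ω)) = 0 := by
        apply b_zero_of_four_le
        rw [e1, show 2*(2*w) = 4*w by ring, abs_mul, hwabs,
          abs_of_pos (by norm_num : (0:ℝ) < 4)]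
        nlinarith
      have hb2 : b ((2:ℝ) ^ (-(2 * ((m+1:ℕ):ℤ))) * ω) = 0 := by
        apply b_zero_of_le_one
        rw [e2, abs_div, hwabs, abs_of_pos (by norm_num : (0:ℝ) < 2)]
        linarith
      have e3 : 2 * ((2:ℝ) ^ (-(2 * ((m+1:ℕ):ℤ))) * ω) = w := by
        rw [e2]; ring
      rw [hb1, hb2, e1, e3]
      have := b_sq_add (x := w) (by rw [hwabs]; exact hz1) (by rw [hwabs]; linarith)
      linarith
end

section
/- The function ψ̂₂ defined by ψ̂₂(ω) = sqrt(v(1+ω)) for ω ≤ 0 and sqrt(v(1-ω)) for ω > 0 satisfies ψ̂₂(ω-1)² + ψ̂₂(ω)² + ψ̂₂(ω+1)² = 1 for all |ω| ≤ 1. -/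
noncomputable def psi2 (ω : ℝ) : ℝ :=
  if ω ≤ 0 then Real.sqrt (v (1 + ω)) else Real.sqrt (v (1 - ω))

lemma v_nonneg (x : ℝ) : 0 ≤ v x := by
  unfold v
  split_ifs with h1 h2
  · exact le_rfl
  · have hx : 0 ≤ x := le_of_not_gt h1
    have h4 : 0 ≤ x^4 := pow_nonneg hx 4
    nlinarith [mul_nonneg h4 (sq_nonneg (1-x)), mul_nonneg (mul_nonneg h4 hx) (sq_nonneg (1-x)),
      mul_nonneg h4 (mul_nonneg hx (sub_nonneg.2 h2))]
  · norm_num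

lemma sq_sqrt_v (x : ℝ) : Real.sqrt (v x) ^ 2 = v x := Real.sq_sqrt (v_nonneg x)

lemma v_neg {x : ℝ} (h : x ≤ 0) : v x = 0 := by
  unfold v
  rcases lt_or_eq_of_le h with h' | h'
  · simp [h']
  · subst h'; norm_num

lemma v_partition {x : ℝ} (h0 : 0 ≤ x) (h1 : x ≤ 1) : v x + v (1 - x) = 1 := by
  unfold v
  rw [if_neg (not_lt.2 h0), if_pos h1, if_neg (by linarith : ¬ (1 - x < 0)),
    if_pos (by linarith : (1:ℝ) - x ≤ 1)]
  ring

theorem psi2_three_shifts :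
    ∀ ω : ℝ, |ω| ≤ 1 →
      psi2 (ω - 1) ^ 2 + psi2 ω ^ 2 + psi2 (ω + 1) ^ 2 = 1 := by
  intro ω hω
  rw [abs_le] at hω
  obtain ⟨h1, h2⟩ := hω
  unfold psi2
  rcases le_or_gt ω 0 with h | h
  · rw [if_pos (by linarith : ω - 1 ≤ 0), if_pos h]
    rcases le_or_gt (ω + 1) 0 with h3 | h3
    · rw [if_pos h3]
      have hω1 : ω = -1 := by linarith
      subst hω1
      norm_num [sq_sqrt_v, v_neg, v]
    · rw [if_neg (not_le.2 h3)]
      rw [sq_sqrt_v, sq_sqrt_v, sq_sqrt_v]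
      rw [v_neg (by linarith : 1 + (ω - 1) ≤ 0)]
      have := v_partition (by linarith : (0:ℝ) ≤ 1 + ω) (by linarith : 1 + ω ≤ 1)
      have heq : 1 - (1 + ω) = 1 - (ω + 1) := by ring
      linarith [heq ▸ this]
  · rw [if_pos (by linarith : ω - 1 ≤ 0), if_neg (not_le.2 h),
      if_neg (by push_neg; linarith : ¬ (ω + 1 ≤ 0))]
    rw [sq_sqrt_v, sq_sqrt_v, sq_sqrt_v]
    rw [v_neg (by linarith : 1 - (ω + 1) ≤ 0)]
    have := v_partition (le_of_lt h) h2
    have heq : 1 + (ω - 1) = ω := by ring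
    rw [heq]
    linarith
end
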